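/- Let G=(V,E) be a weighted undirected connected simple locally finite graph with edge weights w_{xy}>0 and let x,y be neighboring vertices. Then κ(x,y) ≥ −2(1 − w_{xy}/d_x − w_{xy}/d_y)_+. -/

import Mathlib

open SimpleGraph Finset

variable {V : Type*}

/-- A system of edge weights on `G`: symmetric, positive on edges and zero elsewhere. -/
def IsWeight (G : SimpleGraph V) (w : V → V → ℝ) : Prop :=
  (∀ u v, w u v = w v u) ∧ (∀ u v, G.Adj u v → 0 < w u v) ∧ (∀ u v, ¬G.Adj u v → w u v = 0)

/-- The weighted degree `d_x = ∑_{y∼x} w_{xy}`. -/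
noncomputable def wdeg (G : SimpleGraph V) [G.LocallyFinite] (w : V → V → ℝ) (x : V) : ℝ :=
  ∑ y ∈ G.neighborFinset x, w x y

/-- The probability measure attached to a vertex `x`: `m_x(z) = w_{xz}/d_x` for `z ∼ x`. -/
noncomputable def wMeasure (G : SimpleGraph V) [G.LocallyFinite] [DecidableRel G.Adj]
    (w : V → V → ℝ) (x z : V) : ℝ :=
  if G.Adj x z then w x z / wdeg G w x else 0

/-- A coupling (transfer plan) between the measures `m_x` and `m_y`. -/
def IsWCoupling (G : SimpleGraph V) [G.LocallyFinite] [DecidableRel G.Adj]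
    (w : V → V → ℝ) (x y : V) (ξ : V → V → ℝ) : Prop :=
  (∀ u v, 0 ≤ ξ u v) ∧
  (∀ u v, ξ u v ≠ 0 → G.Adj x u ∧ G.Adj y v) ∧
  (∀ u, ∑ v ∈ G.neighborFinset y, ξ u v = wMeasure G w x u) ∧
  (∀ v, ∑ u ∈ G.neighborFinset x, ξ u v = wMeasure G w y v)

/-- The transportation distance `W₁(m_x, m_y)`. -/
noncomputable def wW1 (G : SimpleGraph V) [G.LocallyFinite] [DecidableRel G.Adj]
    (w : V → V → ℝ) (x y : V) : ℝ :=
  sInf { c : ℝ | ∃ ξ : V → V → ℝ, IsWCoupling G w x y ξ ∧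
    c = ∑ u ∈ G.neighborFinset x, ∑ v ∈ G.neighborFinset y, (G.dist u v : ℝ) * ξ u v }

/-- Ollivier's Ricci curvature `κ(x,y) = 1 - W₁(m_x,m_y)/d(x,y)` on a weighted graph. -/
noncomputable def wRicci (G : SimpleGraph V) [G.LocallyFinite] [DecidableRel G.Adj]
    (w : V → V → ℝ) (x y : V) : ℝ :=
  1 - wW1 G w x y / (G.dist x y : ℝ)

/-- Positive part of a real number: `a₊ = max a 0`. -/
noncomputable def posPart' (a : ℝ) : ℝ := max a 0

/-- On a weighted connected locally finite graph, for neighbors `x ∼ y`,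
`κ(x,y) ≥ -2(1 - w_{xy}/d_x - w_{xy}/d_y)₊`. -/
theorem wricci_lower_bound (G : SimpleGraph V) [G.LocallyFinite] [DecidableRel G.Adj]
    (w : V → V → ℝ) (hw : IsWeight G w)
    (hG : G.Connected) (x y : V) (hxy : G.Adj x y) :
    wRicci G w x y ≥
      -2 * posPart' (1 - w x y / wdeg G w x - w x y / wdeg G w y) := by
  classical
  obtain ⟨hsymm, hpos, hzero⟩ := hw
  have hyx : G.Adj y x := hxy.symm
  set dx := wdeg G w x with hdx
  set dy := wdeg G w y with hdy
  have hymem : y ∈ G.neighborFinset x := by simpa using hxy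
  have hxmem : x ∈ G.neighborFinset y := by simpa using hyx
  have hwpos : 0 < w x y := hpos x y hxy
  have hterm_x : ∀ z ∈ G.neighborFinset x, 0 ≤ w x z := fun z hz =>
    (hpos x z (by simpa using hz)).le
  have hterm_y : ∀ z ∈ G.neighborFinset y, 0 ≤ w y z := fun z hz =>
    (hpos y z (by simpa using hz)).le
  have hdx_ge : w x y ≤ dx := by
    have := Finset.single_le_sum hterm_x hymem
    rw [hdx]; exact this
  have hdy_ge : w x y ≤ dy := by
    have := Finset.single_le_sum hterm_y hxmem
    rw [hdy, ← hsymm x y] at *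
    exact this
  have hdx_pos : 0 < dx := lt_of_lt_of_le hwpos hdx_ge
  have hdy_pos : 0 < dy := lt_of_lt_of_le hwpos hdy_ge
  set a := w x y / dx with hadef
  set b := w x y / dy with hbdef
  have ha0 : 0 < a := div_pos hwpos hdx_pos
  have hb0 : 0 < b := div_pos hwpos hdy_pos
  have ha1 : a ≤ 1 := by rw [hadef]; exact (div_le_one hdx_pos).2 hdx_ge
  have hb1 : b ≤ 1 := by rw [hbdef]; exact (div_le_one hdy_pos).2 hdy_ge
  -- basic facts on the measures
  have hmx_nn : ∀ u, 0 ≤ wMeasure G w x u := by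
    intro u; rw [wMeasure]; split
    · exact div_nonneg (hpos x u (by assumption)).le hdx_pos.le
    · exact le_refl 0
  have hmy_nn : ∀ v, 0 ≤ wMeasure G w y v := by
    intro v; rw [wMeasure]; split
    · exact div_nonneg (hpos y v (by assumption)).le hdy_pos.le
    · exact le_refl 0
  have hmx_eq : ∀ z ∈ G.neighborFinset x, wMeasure G w x z = w x z / dx := by
    intro z hz; rw [wMeasure, if_pos (by simpa using hz), hdx]
  have hmy_eq : ∀ z ∈ G.neighborFinset y, wMeasure G w y z = w y z / dy := by
    intro z hz; rw [wMeasure, if_pos (by simpa using hz), hdy]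
  have hmxy : wMeasure G w x y = a := by
    rw [hmx_eq y hymem, hadef]
  have hmyx : wMeasure G w y x = b := by
    rw [hmy_eq x hxmem, hsymm y x, hbdef]
  have hmx_sum : ∑ u ∈ G.neighborFinset x, wMeasure G w x u = 1 := by
    rw [Finset.sum_congr rfl hmx_eq, ← Finset.sum_div]
    rw [show (∑ z ∈ G.neighborFinset x, w x z) = dx from hdx.symm]
    exact div_self hdx_pos.ne'
  have hmy_sum : ∑ v ∈ G.neighborFinset y, wMeasure G w y v = 1 := by
    rw [Finset.sum_congr rfl hmy_eq, ← Finset.sum_div]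
    rw [show (∑ z ∈ G.neighborFinset y, w y z) = dy from hdy.symm]
    exact div_self hdy_pos.ne'
  have hT : ∑ u ∈ (G.neighborFinset x).erase y, wMeasure G w x u = 1 - a := by
    have h := Finset.add_sum_erase (G.neighborFinset x) (wMeasure G w x) hymem
    rw [hmxy] at h; linarith [hmx_sum, h]
  have hS : ∑ v ∈ (G.neighborFinset y).erase x, wMeasure G w y v = 1 - b := by
    have h := Finset.add_sum_erase (G.neighborFinset y) (wMeasure G w y) hxmem
    rw [hmyx] at h; linarith [hmy_sum, h]
  -- the constants of the coupling
  set p := max (a + b - 1) 0 with hp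
  set t := max (1 - a - b) 0 with ht
  set c1 := min a (1 - b) / (1 - b) with hc1
  set c2 := min b (1 - a) / (1 - a) with hc2
  set c3 := t / ((1 - a) * (1 - b)) with hc3
  have hpnn : 0 ≤ p := le_max_right _ _
  have htnn : 0 ≤ t := le_max_right _ _
  have hc1nn : 0 ≤ c1 := div_nonneg (le_min ha0.le (by linarith)) (by linarith)
  have hc2nn : 0 ≤ c2 := div_nonneg (le_min hb0.le (by linarith)) (by linarith)
  have hc3nn : 0 ≤ c3 := div_nonneg htnn (mul_nonneg (by linarith) (by linarith))
  -- the coupling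
  set ξ : V → V → ℝ := fun u v =>
    if G.Adj x u ∧ G.Adj y v then
      (if u = y then (if v = x then p else c1 * wMeasure G w y v)
       else (if v = x then c2 * wMeasure G w x u
             else c3 * (wMeasure G w x u * wMeasure G w y v)))
    else 0 with hξ
  have hnn : ∀ u v, 0 ≤ ξ u v := by
    intro u v
    simp only [hξ]
    split_ifs
    · exact hpnn
    · exact mul_nonneg hc1nn (hmy_nn v)
    · exact mul_nonneg hc2nn (hmx_nn u)
    · exact mul_nonneg hc3nn (mul_nonneg (hmx_nn u) (hmy_nn v))
    · exact le_refl 0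
  have hsupp : ∀ u v, ξ u v ≠ 0 → G.Adj x u ∧ G.Adj y v := by
    intro u v h
    by_contra hc
    exact h (by simp only [hξ]; rw [if_neg hc])
  -- key scalar identities
  have hkey1 : p + c1 * (1 - b) = a := by
    rcases eq_or_lt_of_le hb1 with hb | hb
    · have h0 : (1 : ℝ) - b = 0 := by rw [← hb]; ring
      rw [h0, mul_zero, hp, add_zero]
      have : a + b - 1 = a := by rw [← hb]; ring
      rw [this, max_eq_left ha0.le]
    · have h0 : (1 : ℝ) - b ≠ 0 := by linarith
      rw [hc1, div_mul_cancel₀ _ h0, hp]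
      rcases le_total (a + b) 1 with h | h
      · rw [max_eq_right (by linarith), min_eq_left (by linarith)]; ring
      · rw [max_eq_left (by linarith), min_eq_right (by linarith)]; ring
  have hkey2 : p + c2 * (1 - a) = b := by
    rcases eq_or_lt_of_le ha1 with ha | ha
    · have h0 : (1 : ℝ) - a = 0 := by rw [← ha]; ring
      rw [h0, mul_zero, hp, add_zero]
      have : a + b - 1 = b := by rw [← ha]; ring
      rw [this, max_eq_left hb0.le]
    · have h0 : (1 : ℝ) - a ≠ 0 := by linarith
      rw [hc2, div_mul_cancel₀ _ h0, hp]
      rcases le_total (a + b) 1 with h | h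
      · rw [max_eq_right (by linarith), min_eq_left (by linarith)]; ring
      · rw [max_eq_left (by linarith), min_eq_right (by linarith)]; ring
  have hmtb : min b (1 - a) + t = 1 - a := by
    rcases le_total b (1 - a) with h | h
    · rw [min_eq_left h, ht, max_eq_left (by linarith)]; ring
    · rw [min_eq_right h, ht, max_eq_right (by linarith)]; ring
  have hmta : min a (1 - b) + t = 1 - b := by
    rcases le_total a (1 - b) with h | h
    · rw [min_eq_left h, ht, max_eq_left (by linarith)]; ring
    · rw [min_eq_right h, ht, max_eq_right (by linarith)]; ring
  have hfac_row : a < 1 → c2 + c3 * (1 - b) = 1 := by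
    intro halt
    have h1a : (1 : ℝ) - a ≠ 0 := by linarith
    rcases eq_or_lt_of_le hb1 with hb | hb
    · have h0 : (1 : ℝ) - b = 0 := by rw [← hb]; ring
      rw [h0, mul_zero, add_zero, hc2]
      rw [min_eq_right (by rw [← hb]; linarith), div_self h1a]
    · have h1b : (1 : ℝ) - b ≠ 0 := by linarith
      have h5 : c3 * (1 - b) = t / (1 - a) := by
        rw [hc3]; field_simp
      rw [h5, hc2, ← add_div, hmtb, div_self h1a]
  have hfac_col : b < 1 → c1 + c3 * (1 - a) = 1 := by
    intro hblt
    have h1b : (1 : ℝ) - b ≠ 0 := by linarith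
    rcases eq_or_lt_of_le ha1 with ha | ha
    · have h0 : (1 : ℝ) - a = 0 := by rw [← ha]; ring
      rw [h0, mul_zero, add_zero, hc1]
      rw [min_eq_right (by rw [← ha]; linarith), div_self h1b]
    · have h1a : (1 : ℝ) - a ≠ 0 := by linarith
      have h5 : c3 * (1 - a) = t / (1 - b) := by
        rw [hc3]; field_simp
      rw [h5, hc1, ← add_div, hmta, div_self h1b]
  -- strictness of a, b in presence of other neighbors
  have halt_of : ∀ u ∈ (G.neighborFinset x).erase y, a < 1 := by
    intro u hu
    have humem := Finset.mem_of_mem_erase hu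
    have h2 : w x u ≤ ∑ z ∈ (G.neighborFinset x).erase y, w x z :=
      Finset.single_le_sum (fun z hz => hterm_x z (Finset.mem_of_mem_erase hz)) hu
    have h3 : w x y + ∑ z ∈ (G.neighborFinset x).erase y, w x z = dx := by
      rw [hdx]; exact Finset.add_sum_erase _ _ hymem
    have h4 : 0 < w x u := hpos x u (by simpa using humem)
    rw [hadef]
    exact (div_lt_one hdx_pos).2 (by linarith)
  have hblt_of : ∀ v ∈ (G.neighborFinset y).erase x, b < 1 := by
    intro v hv
    have hvmem := Finset.mem_of_mem_erase hv
    have h2 : w y v ≤ ∑ z ∈ (G.neighborFinset y).erase x, w y z :=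
      Finset.single_le_sum (fun z hz => hterm_y z (Finset.mem_of_mem_erase hz)) hv
    have h3 : w y x + ∑ z ∈ (G.neighborFinset y).erase x, w y z = dy := by
      rw [hdy]; exact Finset.add_sum_erase _ _ hxmem
    have h4 : 0 < w y v := hpos y v (by simpa using hvmem)
    rw [hbdef, hsymm x y]
    exact (div_lt_one hdy_pos).2 (by linarith)
  -- evaluation of ξ on the four regions
  have hval_yx : ξ y x = p := by
    simp [hξ, hxy, hyx]
  have hval_yv : ∀ v ∈ (G.neighborFinset y).erase x, ξ y v = c1 * wMeasure G w y v := by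
    intro v hv
    have hvadj : G.Adj y v := by simpa using Finset.mem_of_mem_erase hv
    have hvx : v ≠ x := Finset.ne_of_mem_erase hv
    simp [hξ, hxy, hvadj, hvx]
  have hval_ux : ∀ u ∈ (G.neighborFinset x).erase y, ξ u x = c2 * wMeasure G w x u := by
    intro u hu
    have huadj : G.Adj x u := by simpa using Finset.mem_of_mem_erase hu
    have huy : u ≠ y := Finset.ne_of_mem_erase hu
    simp [hξ, huadj, hyx, huy]
  have hval_uv : ∀ u ∈ (G.neighborFinset x).erase y, ∀ v ∈ (G.neighborFinset y).erase x,
      ξ u v = c3 * (wMeasure G w x u * wMeasure G w y v) := by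
    intro u hu v hv
    have huadj : G.Adj x u := by simpa using Finset.mem_of_mem_erase hu
    have hvadj : G.Adj y v := by simpa using Finset.mem_of_mem_erase hv
    have huy : u ≠ y := Finset.ne_of_mem_erase hu
    have hvx : v ≠ x := Finset.ne_of_mem_erase hv
    simp [hξ, huadj, hvadj, huy, hvx]
  -- row sums
  have hrowy : ∑ v ∈ G.neighborFinset y, ξ y v = a := by
    rw [← Finset.add_sum_erase _ _ hxmem, hval_yx,
      Finset.sum_congr rfl (hval_yv), ← Finset.mul_sum, hS, hkey1]
  have hrowu : ∀ u ∈ (G.neighborFinset x).erase y,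
      ∑ v ∈ G.neighborFinset y, ξ u v = wMeasure G w x u := by
    intro u hu
    have halt : a < 1 := halt_of u hu
    rw [← Finset.add_sum_erase _ _ hxmem, hval_ux u hu,
      Finset.sum_congr rfl (hval_uv u hu)]
    have : ∀ v ∈ (G.neighborFinset y).erase x,
        c3 * (wMeasure G w x u * wMeasure G w y v)
          = (c3 * wMeasure G w x u) * wMeasure G w y v := by intro v _; ring
    rw [Finset.sum_congr rfl this, ← Finset.mul_sum, hS]
    have hfr := hfac_row halt
    linear_combination (wMeasure G w x u) * hfr
  have hrow : ∀ u, ∑ v ∈ G.neighborFinset y, ξ u v = wMeasure G w x u := by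
    intro u
    by_cases hu : G.Adj x u
    · by_cases huy : u = y
      · subst huy; rw [hrowy, hmxy]
      · exact hrowu u (Finset.mem_erase.2 ⟨huy, by simpa using hu⟩)
    · rw [wMeasure, if_neg hu]
      refine Finset.sum_eq_zero fun v _ => ?_
      simp only [hξ]; rw [if_neg (fun h => hu h.1)]
  -- column sums
  have hcolx : ∑ u ∈ G.neighborFinset x, ξ u x = b := by
    rw [← Finset.add_sum_erase _ _ hymem, hval_yx,
      Finset.sum_congr rfl (hval_ux), ← Finset.mul_sum, hT, hkey2]
  have hcolv : ∀ v ∈ (G.neighborFinset y).erase x,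
      ∑ u ∈ G.neighborFinset x, ξ u v = wMeasure G w y v := by
    intro v hv
    have hblt : b < 1 := hblt_of v hv
    rw [← Finset.add_sum_erase _ _ hymem, hval_yv v hv]
    have : ∀ u ∈ (G.neighborFinset x).erase y,
        ξ u v = (c3 * wMeasure G w y v) * wMeasure G w x u := by
      intro u hu; rw [hval_uv u hu v hv]; ring
    rw [Finset.sum_congr rfl this, ← Finset.mul_sum, hT]
    have hfc := hfac_col hblt
    linear_combination (wMeasure G w y v) * hfc
  have hcol : ∀ v, ∑ u ∈ G.neighborFinset x, ξ u v = wMeasure G w y v := by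
    intro v
    by_cases hv : G.Adj y v
    · by_cases hvx : v = x
      · subst hvx; rw [hcolx, hmyx]
      · exact hcolv v (Finset.mem_erase.2 ⟨hvx, by simpa using hv⟩)
    · rw [wMeasure, if_neg hv]
      refine Finset.sum_eq_zero fun u _ => ?_
      simp only [hξ]; rw [if_neg (fun h => hv h.2)]
  have hcoup : IsWCoupling G w x y ξ := ⟨hnn, hsupp, hrow, hcol⟩
  -- distance facts
  have hdyv : ∀ v ∈ G.neighborFinset y, (G.dist y v : ℝ) = 1 := by
    intro v hv
    have : G.dist y v = 1 := SimpleGraph.dist_eq_one_iff_adj.2 (by simpa using hv)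
    rw [this]; norm_num
  have hdux : ∀ u ∈ G.neighborFinset x, (G.dist u x : ℝ) = 1 := by
    intro u hu
    have hadj : G.Adj x u := by simpa using hu
    have : G.dist u x = 1 := SimpleGraph.dist_eq_one_iff_adj.2 hadj.symm
    rw [this]; norm_num
  have hd3 : ∀ u ∈ G.neighborFinset x, ∀ v ∈ G.neighborFinset y, (G.dist u v : ℝ) ≤ 3 := by
    intro u hu v hv
    have h1 : G.dist u v ≤ G.dist u x + G.dist x v := hG.dist_triangle
    have h2 : G.dist x v ≤ G.dist x y + G.dist y v := hG.dist_triangle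
    have hadj : G.Adj x u := by simpa using hu
    have e1 : G.dist u x = 1 := SimpleGraph.dist_eq_one_iff_adj.2 hadj.symm
    have e2 : G.dist x y = 1 := SimpleGraph.dist_eq_one_iff_adj.2 hxy
    have e3 : G.dist y v = 1 := SimpleGraph.dist_eq_one_iff_adj.2 (by simpa using hv)
    have : G.dist u v ≤ 3 := by omega
    exact_mod_cast this
  -- the cost of the coupling
  have hcost : (∑ u ∈ G.neighborFinset x, ∑ v ∈ G.neighborFinset y,
      (G.dist u v : ℝ) * ξ u v) ≤ 1 + 2 * t := by
    rw [← Finset.add_sum_erase _ _ hymem]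
    have hfirst : ∑ v ∈ G.neighborFinset y, (G.dist y v : ℝ) * ξ y v = a := by
      rw [Finset.sum_congr rfl (fun v hv => by rw [hdyv v hv, one_mul]), hrowy]
    rw [hfirst]
    have hsecond : ∑ u ∈ (G.neighborFinset x).erase y,
        ∑ v ∈ G.neighborFinset y, (G.dist u v : ℝ) * ξ u v
        ≤ (c2 + 3 * (c3 * (1 - b))) * (1 - a) := by
      have hinner : ∀ u ∈ (G.neighborFinset x).erase y,
          ∑ v ∈ G.neighborFinset y, (G.dist u v : ℝ) * ξ u v
          ≤ (c2 + 3 * (c3 * (1 - b))) * wMeasure G w x u := by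
        intro u hu
        have humem := Finset.mem_of_mem_erase hu
        rw [← Finset.add_sum_erase _ _ hxmem]
        have e1 : (G.dist u x : ℝ) * ξ u x = c2 * wMeasure G w x u := by
          rw [hdux u humem, hval_ux u hu, one_mul]
        have e2 : ∑ v ∈ (G.neighborFinset y).erase x, (G.dist u v : ℝ) * ξ u v
            ≤ ∑ v ∈ (G.neighborFinset y).erase x,
              3 * ((c3 * wMeasure G w x u) * wMeasure G w y v) := by
          refine Finset.sum_le_sum fun v hv => ?_
          have hvmem := Finset.mem_of_mem_erase hv
          have h1 : (G.dist u v : ℝ) ≤ 3 := hd3 u humem v hvmem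
          have h2 : ξ u v = (c3 * wMeasure G w x u) * wMeasure G w y v := by
            rw [hval_uv u hu v hv]; ring
          rw [h2]
          exact mul_le_mul_of_nonneg_right h1
            (mul_nonneg (mul_nonneg hc3nn (hmx_nn u)) (hmy_nn v))
        have e3 : ∑ v ∈ (G.neighborFinset y).erase x,
            3 * ((c3 * wMeasure G w x u) * wMeasure G w y v)
            = 3 * (c3 * wMeasure G w x u) * (1 - b) := by
          rw [← Finset.mul_sum, ← Finset.mul_sum, hS]; ring
        rw [e1]
        calc c2 * wMeasure G w x u + ∑ v ∈ (G.neighborFinset y).erase x,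
              (G.dist u v : ℝ) * ξ u v
            ≤ c2 * wMeasure G w x u + 3 * (c3 * wMeasure G w x u) * (1 - b) := by
              rw [← e3]; linarith [e2]
          _ = (c2 + 3 * (c3 * (1 - b))) * wMeasure G w x u := by ring
      calc ∑ u ∈ (G.neighborFinset x).erase y,
            ∑ v ∈ G.neighborFinset y, (G.dist u v : ℝ) * ξ u v
          ≤ ∑ u ∈ (G.neighborFinset x).erase y,
            (c2 + 3 * (c3 * (1 - b))) * wMeasure G w x u :=
            Finset.sum_le_sum hinner
        _ = (c2 + 3 * (c3 * (1 - b))) * (1 - a) := by rw [← Finset.mul_sum, hT]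
    have e1 : c2 * (1 - a) ≤ min b (1 - a) := by
      rcases eq_or_lt_of_le ha1 with ha | ha
      · have h0 : (1 : ℝ) - a = 0 := by rw [← ha]; ring
        rw [h0, mul_zero]
        exact le_min hb0.le (le_refl 0)
      · have h0 : (1 : ℝ) - a ≠ 0 := by linarith
        rw [hc2, div_mul_cancel₀ _ h0]
    have e2 : c3 * (1 - b) * (1 - a) ≤ t := by
      rcases eq_or_lt_of_le ha1 with ha | ha
      · have h0 : (1 : ℝ) - a = 0 := by rw [← ha]; ring
        rw [h0, mul_zero]; exact htnn
      · rcases eq_or_lt_of_le hb1 with hb | hb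
        · have h0 : (1 : ℝ) - b = 0 := by rw [← hb]; ring
          rw [h0, mul_zero, zero_mul]; exact htnn
        · have h1a : (1 : ℝ) - a ≠ 0 := by linarith
          have h1b : (1 : ℝ) - b ≠ 0 := by linarith
          have : c3 * (1 - b) * (1 - a) = t := by rw [hc3]; field_simp
          rw [this]
    have e3 : min b (1 - a) + t = 1 - a := hmtb
    have expand : (c2 + 3 * (c3 * (1 - b))) * (1 - a)
        = c2 * (1 - a) + 3 * (c3 * (1 - b) * (1 - a)) := by ring
    linarith [hsecond, htnn]
  -- conclude via the infimum
  have hbdd : BddBelow { c : ℝ | ∃ ξ' : V → V → ℝ, IsWCoupling G w x y ξ' ∧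
      c = ∑ u ∈ G.neighborFinset x, ∑ v ∈ G.neighborFinset y, (G.dist u v : ℝ) * ξ' u v } := by
    refine ⟨0, fun c hc => ?_⟩
    obtain ⟨ξ', hξ', rfl⟩ := hc
    refine Finset.sum_nonneg fun u _ => Finset.sum_nonneg fun v _ => ?_
    exact mul_nonneg (Nat.cast_nonneg _) (hξ'.1 u v)
  have hmem : (∑ u ∈ G.neighborFinset x, ∑ v ∈ G.neighborFinset y,
      (G.dist u v : ℝ) * ξ u v) ∈ { c : ℝ | ∃ ξ' : V → V → ℝ, IsWCoupling G w x y ξ' ∧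
      c = ∑ u ∈ G.neighborFinset x, ∑ v ∈ G.neighborFinset y, (G.dist u v : ℝ) * ξ' u v } :=
    ⟨ξ, hcoup, rfl⟩
  have hW : wW1 G w x y ≤ 1 + 2 * t := le_trans (csInf_le hbdd hmem) hcost
  have hdist : G.dist x y = 1 := SimpleGraph.dist_eq_one_iff_adj.2 hxy
  rw [wRicci, hdist, ge_iff_le, posPart']
  rw [show max (1 - a - b) 0 = t from ht.symm]
  have : wW1 G w x y / ((1 : ℕ) : ℝ) = wW1 G w x y := by norm_num
  rw [this]
  linarith [hW, htnn]
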